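/- If f_n is defined by f_0 = 1 and f_n = Σ_{i=0}^{n-1} f_{n-1-i}·t_i with t_0 = 1 and t_i = (1/i)·binom(3i, i−1), then liminf_{n→∞} f_n^{1/n} = 27/4. -/

import Mathlib

open Filter Topology


private lemma key1 (k : ℕ) :
    Nat.choose (3*k+3) (k+1) * (k+1) = Nat.choose (3*k+3) k * (2*k+3) := by
  have h := Nat.choose_succ_right_eq (3*k+3) k
  rw [show 3*k+3-k = 2*k+3 by omega] at h
  exact h

private lemma key2 (m : ℕ) :
    Nat.choose (3*m+3) (m+1) * ((m+1)*((2*m+1)*(2*m+2))) =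
      Nat.choose (3*m) m * ((3*m+1)*((3*m+2)*(3*m+3))) := by
  have h1 : Nat.choose (3*m) m * Nat.factorial m * Nat.factorial (2*m)
      = Nat.factorial (3*m) := by
    have := Nat.choose_mul_factorial_mul_factorial (show m ≤ 3*m by omega)
    rwa [show 3*m-m = 2*m by omega] at this
  have h2 : Nat.choose (3*m+3) (m+1) * Nat.factorial (m+1) * Nat.factorial (2*m+2)
      = Nat.factorial (3*m+3) := by
    have := Nat.choose_mul_factorial_mul_factorial (show m+1 ≤ 3*m+3 by omega)
    rwa [show 3*m+3-(m+1) = 2*m+2 by omega] at this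
  have e3 : Nat.factorial (3*m+3) = (3*m+3)*((3*m+2)*((3*m+1)*Nat.factorial (3*m))) := by
    rw [show 3*m+3 = (3*m+2)+1 by omega, Nat.factorial_succ,
        show 3*m+2 = (3*m+1)+1 by omega, Nat.factorial_succ,
        show 3*m+1 = (3*m)+1 by omega, Nat.factorial_succ]
  have em : Nat.factorial (m+1) = (m+1)*Nat.factorial m := Nat.factorial_succ m
  have e2m : Nat.factorial (2*m+2) = (2*m+2)*((2*m+1)*Nat.factorial (2*m)) := by
    rw [show 2*m+2 = (2*m+1)+1 by omega, Nat.factorial_succ,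
        show 2*m+1 = (2*m)+1 by omega, Nat.factorial_succ]
  have hpos : 0 < Nat.factorial m * Nat.factorial (2*m) :=
    Nat.mul_pos (Nat.factorial_pos m) (Nat.factorial_pos (2*m))
  apply Nat.eq_of_mul_eq_mul_right hpos
  calc Nat.choose (3*m+3) (m+1) * ((m+1)*((2*m+1)*(2*m+2))) * (Nat.factorial m * Nat.factorial (2*m))
      = Nat.choose (3*m+3) (m+1) * Nat.factorial (m+1) * Nat.factorial (2*m+2) := by
        rw [em, e2m]; ring
    _ = Nat.factorial (3*m+3) := h2
    _ = (3*m+3)*((3*m+2)*((3*m+1)*Nat.factorial (3*m))) := e3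
    _ = (3*m+3)*((3*m+2)*((3*m+1)*(Nat.choose (3*m) m * Nat.factorial m * Nat.factorial (2*m)))) := by rw [h1]
    _ = Nat.choose (3*m) m * ((3*m+1)*((3*m+2)*(3*m+3))) * (Nat.factorial m * Nat.factorial (2*m)) := by ring

private noncomputable def rr (m : ℕ) : ℝ := (Nat.choose (3*m) m : ℝ) * (4/27)^m

private lemma rr_nonneg (m : ℕ) : 0 ≤ rr m := by
  unfold rr; positivity

private lemma rr_step (m : ℕ) :
    rr (m+1) * (((m:ℝ)+1)*((2*m+1)*(2*m+2))) * 27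
      = rr m * ((3*(m:ℝ)+1)*((3*m+2)*(3*m+3))) * 4 := by
  have h := key2 m
  have h' : ((Nat.choose (3*m+3) (m+1) * ((m+1)*((2*m+1)*(2*m+2))) : ℕ) : ℝ)
      = ((Nat.choose (3*m) m * ((3*m+1)*((3*m+2)*(3*m+3))) : ℕ) : ℝ) := by exact_mod_cast h
  push_cast at h'
  unfold rr
  rw [show 3*(m+1) = 3*m+3 by omega]
  have hp : (4/27:ℝ)^(m+1) = (4/27)^m * (4/27) := pow_succ _ _
  rw [hp]
  nlinarith [h', pow_nonneg (show (0:ℝ) ≤ 4/27 by norm_num) m]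

private lemma rr_upper (m : ℕ) : rr m * Real.sqrt (m+1) ≤ 1 := by
  induction m with
  | zero => simp [rr]
  | succ m ih =>
    have hD : (0:ℝ) < ((m:ℝ)+1)*((2*m+1)*(2*m+2)) := by positivity
    have hstep := rr_step m
    have hrc : rr (m+1) = rr m * ((4*((3*(m:ℝ)+1)*((3*m+2)*(3*m+3))))/(27*(((m:ℝ)+1)*((2*m+1)*(2*m+2))))) := by
      field_simp
      nlinarith [hstep]
    set c : ℝ := (4*((3*(m:ℝ)+1)*((3*m+2)*(3*m+3))))/(27*(((m:ℝ)+1)*((2*m+1)*(2*m+2)))) with hc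
    have hc0 : 0 ≤ c := by positivity
    have hkey : c * Real.sqrt ((m:ℝ)+1+1) ≤ Real.sqrt ((m:ℝ)+1) := by
      rw [show Real.sqrt ((m:ℝ)+1) = Real.sqrt ((m:ℝ)+1) from rfl]
      have h1 : 0 ≤ c * Real.sqrt ((m:ℝ)+1+1) := by positivity
      have h2 : (c * Real.sqrt ((m:ℝ)+1+1))^2 ≤ (m:ℝ)+1 := by
        rw [mul_pow, Real.sq_sqrt (by positivity)]
        rw [hc, div_pow, div_mul_eq_mul_div, div_le_iff₀ (by positivity)]
        have hm : (0:ℝ) ≤ (m:ℝ) := Nat.cast_nonneg m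
        nlinarith [hm, mul_nonneg hm hm, mul_nonneg (mul_nonneg hm hm) hm]
      exact (Real.le_sqrt h1 (by positivity)).2 h2
    calc rr (m+1) * Real.sqrt ((m+1:ℕ)+1)
        = rr m * (c * Real.sqrt ((m:ℝ)+1+1)) := by rw [hrc]; push_cast; ring
      _ ≤ rr m * Real.sqrt ((m:ℝ)+1) := by
          exact mul_le_mul_of_nonneg_left hkey (rr_nonneg m)
      _ ≤ 1 := by exact_mod_cast ih

private lemma rr_lower (m : ℕ) : 8 ≤ 9 * rr m * ((m:ℝ)+1) := by
  induction m with
  | zero => simp [rr]; norm_num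
  | succ m ih =>
    have hstep := rr_step m
    have hm : (0:ℝ) ≤ (m:ℝ) := Nat.cast_nonneg m
    rcases Nat.eq_zero_or_pos m with h0 | h1
    · subst h0
      have : rr 1 = 4/9 := by
        unfold rr; norm_num [Nat.choose]
      rw [this]; norm_num
    · have hm1 : (1:ℝ) ≤ (m:ℝ) := by exact_mod_cast h1
      -- rr (m+1) = rr m * c with c ≥ (m+1)/(m+2)
      have hD : (0:ℝ) < ((m:ℝ)+1)*((2*m+1)*(2*m+2)) := by positivity
      have hrge : rr m * ((m:ℝ)+1) / ((m:ℝ)+2) ≤ rr (m+1) := by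
        rw [div_le_iff₀ (by positivity)]
        have hpoly : 0 ≤ rr m * ((4*((3*(m:ℝ)+1)*((3*m+2)*(3*m+3))))*((m:ℝ)+2) - (27*(((m:ℝ)+1)*((2*m+1)*(2*m+2))))*((m:ℝ)+1)) := by
          apply mul_nonneg (rr_nonneg m)
          nlinarith [mul_nonneg hm hm, hm1]
        nlinarith [hstep, hpoly, hD]
      have h8 : 8 ≤ 9 * (rr m * ((m:ℝ)+1) / ((m:ℝ)+2)) * ((m:ℝ)+2) := by
        have : 9 * (rr m * ((m:ℝ)+1) / ((m:ℝ)+2)) * ((m:ℝ)+2) = 9 * rr m * ((m:ℝ)+1) := by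
          field_simp
        rw [this]; linarith [ih]
      push_cast
      calc (8:ℝ) ≤ 9 * (rr m * ((m:ℝ)+1) / ((m:ℝ)+2)) * ((m:ℝ)+2) := h8
        _ ≤ 9 * rr (m+1) * ((m:ℝ)+1+1) := by nlinarith [hrge]

private noncomputable def FF (k : ℕ) : ℝ := 1 / Real.sqrt ((k:ℝ)+1)

private lemma FF_succ (k : ℕ) : FF (k+1) = 1 / Real.sqrt ((k:ℝ)+2) := by
  unfold FF; congr 2; push_cast; ring

private lemma FF_zero : FF 0 = 1 := by unfold FF; simp

private lemma FF_nonneg (k : ℕ) : 0 ≤ FF k := by unfold FF; positivity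


/-- If `f_0 = 1` and `f_n = Σ_{i=0}^{n-1} f_{n-1-i}·t_i` with `t_0 = 1` and
`t_i = (1/i)·binom(3i, i−1)`, then `liminf f_n^{1/n} = 27/4`. -/
theorem liminf_f_root (t f : ℕ → ℝ)
    (ht0 : t 0 = 1)
    (ht : ∀ i : ℕ, 1 ≤ i → t i = (Nat.choose (3 * i) (i - 1) : ℝ) / i)
    (hf0 : f 0 = 1)
    (hf : ∀ n : ℕ, 1 ≤ n → f n = ∑ i ∈ Finset.range n, f (n - 1 - i) * t i) :
    Filter.liminf (fun n : ℕ => f n ^ ((1 : ℝ) / n)) atTop = 27 / 4 := by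
  -- t in closed symmetric form
  have ht' : ∀ m : ℕ, t m = (Nat.choose (3*m) m : ℝ) / (2*m+1) := by
    intro m
    match m with
    | 0 => simpa using ht0
    | k+1 =>
      have h1 := ht (k+1) (by omega)
      rw [show 3*(k+1) = 3*k+3 by omega, show (k+1)-1 = k by omega] at h1
      rw [h1]
      have hk := key1 k
      have hkR : (Nat.choose (3*k+3) (k+1) : ℝ) * ((k:ℝ)+1) = (Nat.choose (3*k+3) k : ℝ) * (2*(k:ℝ)+3) := by
        exact_mod_cast hk
      rw [show 3*(k+1) = 3*k+3 by omega]
      push_cast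
      rw [div_eq_div_iff (by positivity) (by positivity)]
      linarith [hkR]
  -- t m in terms of rr
  have htr : ∀ m : ℕ, t m = rr m * (27/4)^m / (2*(m:ℝ)+1) := by
    intro m
    have hc : rr m * (27/4)^m = (Nat.choose (3*m) m : ℝ) := by
      unfold rr; rw [mul_assoc, ← mul_pow]; norm_num
    rw [ht', ← hc]
  have tpos : ∀ m : ℕ, 0 < t m := by
    intro m
    rw [ht']
    apply div_pos _ (by positivity)
    exact_mod_cast Nat.choose_pos (show m ≤ 3*m by omega)
  have gbound : ∀ k : ℕ, t (k+1) * (4/27)^(k+1)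
      ≤ 1/Real.sqrt ((k:ℝ)+1) - 1/Real.sqrt ((k:ℝ)+2) := by
    intro k
    set u := Real.sqrt ((k:ℝ)+1) with hu
    set v := Real.sqrt ((k:ℝ)+2) with hv
    have hu0 : 0 < u := Real.sqrt_pos.2 (by positivity)
    have hv0 : 0 < v := Real.sqrt_pos.2 (by positivity)
    have hu2 : u^2 = (k:ℝ)+1 := Real.sq_sqrt (by positivity)
    have hv2 : v^2 = (k:ℝ)+2 := Real.sq_sqrt (by positivity)
    have ha2 : ((2*(k:ℝ)+4)*u)^2 = (2*(k:ℝ)+4)^2*((k:ℝ)+1) := by rw [mul_pow, hu2]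
    have hb2 : ((2*(k:ℝ)+3)*v)^2 = (2*(k:ℝ)+3)^2*((k:ℝ)+2) := by rw [mul_pow, hv2]
    have hkey : (2*(k:ℝ)+4)*u ≤ (2*(k:ℝ)+3)*v := by
      have hab : 0 < (2*(k:ℝ)+4)*u + (2*(k:ℝ)+3)*v := by positivity
      nlinarith [ha2, hb2, hab, Nat.cast_nonneg (α := ℝ) k]
    have hv' : Real.sqrt ((((k+1):ℕ):ℝ)+1) = v := by
      rw [hv]; congr 1; push_cast; ring
    have hup : rr (k+1) ≤ 1/v := by
      have h := rr_upper (k+1)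
      rw [hv'] at h
      rw [le_div_iff₀ hv0]
      exact h
    have hg : t (k+1) * (4/27)^(k+1) = rr (k+1) / (2*((k:ℝ)+1)+1) := by
      rw [htr (k+1)]
      have hpow : (27/4:ℝ)^(k+1) * (4/27)^(k+1) = 1 := by rw [← mul_pow]; norm_num
      push_cast
      rw [div_mul_eq_mul_div, mul_assoc, hpow, mul_one]
    rw [hg]
    have h1 : rr (k+1) / (2*((k:ℝ)+1)+1) ≤ (1/v) / (2*((k:ℝ)+1)+1) := by
      gcongr
    have hfinal : (1/v)/(2*((k:ℝ)+1)+1) ≤ 1/u - 1/v := by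
      rw [div_sub_div _ _ hu0.ne' hv0.ne', div_div, div_le_div_iff₀ (by positivity) (by positivity)]
      nlinarith [mul_le_mul_of_nonneg_right hkey hv0.le]
    linarith [h1, hfinal]
  have Ssum : ∀ n : ℕ, ∑ i ∈ Finset.range n, t i * (4/27)^i ≤ 2 := by
    intro n
    match n with
    | 0 => simp
    | N+1 =>
      rw [Finset.sum_range_succ']
      have h0 : t 0 * (4/27:ℝ)^0 = 1 := by rw [ht0]; norm_num
      have hsum2 : ∑ k ∈ Finset.range N, t (k+1) * (4/27)^(k+1)
          ≤ ∑ k ∈ Finset.range N, (FF k - FF (k+1)) := by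
        apply Finset.sum_le_sum
        intro k _
        rw [FF_succ k]
        show _ ≤ 1 / Real.sqrt ((k:ℝ)+1) - 1 / Real.sqrt ((k:ℝ)+2)
        exact gbound k
      have htel : ∑ k ∈ Finset.range N, (FF k - FF (k+1)) = FF 0 - FF N :=
        Finset.sum_range_sub' FF N
      rw [h0]
      calc (∑ k ∈ Finset.range N, t (k+1) * (4/27)^(k+1)) + 1
          ≤ (FF 0 - FF N) + 1 := by rw [← htel]; linarith [hsum2]
        _ ≤ 2 := by rw [FF_zero]; linarith [FF_nonneg N]
  -- positivity of f
  have fpos : ∀ n : ℕ, 0 < f n := by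
    intro n
    induction n using Nat.strong_induction_on with
    | _ n ih =>
      match n with
      | 0 => rw [hf0]; norm_num
      | m+1 =>
        rw [hf (m+1) (by omega)]
        apply Finset.sum_pos _ ⟨0, Finset.mem_range.2 (by omega)⟩
        intro i hi
        exact mul_pos (ih _ (by have := Finset.mem_range.1 hi; omega)) (tpos i)
  have flow : ∀ n : ℕ, 1 ≤ n → t (n-1) ≤ f n := by
    intro n hn
    rw [hf n hn]
    have hmem : n-1 ∈ Finset.range n := Finset.mem_range.2 (by omega)
    have := Finset.single_le_sum (f := fun i => f (n-1-i) * t i)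
      (fun i _ => le_of_lt (mul_pos (fpos _) (tpos i))) hmem
    calc t (n-1) = f (n-1-(n-1)) * t (n-1) := by
          rw [show n-1-(n-1) = 0 by omega, hf0, one_mul]
      _ ≤ _ := this
  have fup : ∀ n : ℕ, f n ≤ (27/4:ℝ)^n := by
    intro n
    induction n using Nat.strong_induction_on with
    | _ n ih =>
      match n with
      | 0 => rw [hf0]; norm_num
      | m+1 =>
        rw [hf (m+1) (by omega)]
        have step1 : ∑ i ∈ Finset.range (m+1), f (m+1-1-i) * t i
            ≤ ∑ i ∈ Finset.range (m+1), (27/4:ℝ)^m * ((4/27)^i * t i) := by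
          apply Finset.sum_le_sum
          intro i hi
          have hi' : i ≤ m := by have := Finset.mem_range.1 hi; omega
          have h1 : f (m+1-1-i) ≤ (27/4:ℝ)^(m-i) := by
            have : m+1-1-i = m-i := by omega
            rw [this]
            exact ih _ (by omega)
          have h2 : (27/4:ℝ)^(m-i) = (27/4)^m * (4/27)^i := by
            have hmi : m - i + i = m := by omega
            have : (27/4:ℝ)^m = (27/4)^(m-i) * (27/4)^i := by rw [← pow_add, hmi]
            rw [this, mul_assoc, ← mul_pow]
            norm_num
          calc f (m+1-1-i) * t i ≤ (27/4:ℝ)^(m-i) * t i :=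
                mul_le_mul_of_nonneg_right h1 (tpos i).le
            _ = (27/4:ℝ)^m * ((4/27)^i * t i) := by rw [h2]; ring
        have step2 : ∑ i ∈ Finset.range (m+1), (27/4:ℝ)^m * ((4/27)^i * t i)
            = (27/4:ℝ)^m * ∑ i ∈ Finset.range (m+1), t i * (4/27)^i := by
          rw [Finset.mul_sum]
          apply Finset.sum_congr rfl
          intro i _; ring
        calc ∑ i ∈ Finset.range (m+1), f (m+1-1-i) * t i
            ≤ (27/4:ℝ)^m * ∑ i ∈ Finset.range (m+1), t i * (4/27)^i := by
              rw [← step2]; exact step1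
          _ ≤ (27/4:ℝ)^m * 2 :=
              mul_le_mul_of_nonneg_left (Ssum (m+1)) (by positivity)
          _ ≤ (27/4:ℝ)^(m+1) := by
              rw [pow_succ]
              exact mul_le_mul_of_nonneg_left (by norm_num) (by positivity)
  -- lower bound on t
  have tlow : ∀ m : ℕ, (27/4:ℝ)^m / (3*((m:ℝ)+1)^2) ≤ t m := by
    intro m
    rw [htr m]
    have hm : (0:ℝ) ≤ (m:ℝ) := Nat.cast_nonneg m
    have hP : (0:ℝ) < (27/4:ℝ)^m := by positivity
    rw [div_le_div_iff₀ (by positivity) (by positivity)]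
    have A := mul_le_mul_of_nonneg_right (rr_lower m) hP.le
    nlinarith [A, mul_nonneg hm hP.le, mul_nonneg hm (mul_nonneg hm hP.le),
      mul_nonneg (mul_nonneg hm hm) (mul_nonneg (rr_nonneg m) hP.le),
      mul_nonneg hm (mul_nonneg (rr_nonneg m) hP.le)]
  have flow2 : ∀ n : ℕ, 1 ≤ n → (4/81:ℝ)/(n:ℝ)^2 * (27/4)^n ≤ f n := by
    intro n hn
    have h1 := tlow (n-1)
    have h2 := flow n hn
    have hn1 : ((n-1:ℕ):ℝ) = (n:ℝ) - 1 := by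
      have : (1:ℕ) ≤ n := hn
      push_cast [this]; ring
    have hnR : (1:ℝ) ≤ (n:ℝ) := by exact_mod_cast hn
    have hpow : (27/4:ℝ)^(n-1) = (27/4)^n * (4/27) := by
      have : n - 1 + 1 = n := by omega
      have h3 : (27/4:ℝ)^(n-1) * (27/4) = (27/4)^n := by rw [← pow_succ, this]
      nlinarith [h3]
    rw [hn1, hpow] at h1
    have hsq : ((n:ℝ) - 1 + 1)^2 = (n:ℝ)^2 := by ring_nf
    rw [hsq] at h1
    calc (4/81:ℝ)/(n:ℝ)^2 * (27/4)^n = (27/4:ℝ)^n * (4/27) / (3*(n:ℝ)^2) := by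
          field_simp; ring
      _ ≤ t (n-1) := h1
      _ ≤ f n := h2
  -- upper bound on the root
  have hub : ∀ n : ℕ, 1 ≤ n → f n ^ ((1:ℝ)/n) ≤ 27/4 := by
    intro n hn
    have hnR : (0:ℝ) < (n:ℝ) := by exact_mod_cast hn
    have h1 : f n ^ ((1:ℝ)/n) ≤ ((27/4:ℝ)^n) ^ ((1:ℝ)/n) :=
      Real.rpow_le_rpow (fpos n).le (fup n) (by positivity)
    have h2 : ((27/4:ℝ)^n) ^ ((1:ℝ)/n) = 27/4 := by
      rw [← Real.rpow_natCast (27/4:ℝ) n, ← Real.rpow_mul (by norm_num)]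
      rw [mul_one_div, div_self hnR.ne', Real.rpow_one]
    exact h1.trans_eq h2
  -- lower bound on the root
  have hlb : ∀ n : ℕ, 1 ≤ n → ((4/81:ℝ)/(n:ℝ)^2) ^ ((1:ℝ)/n) * (27/4) ≤ f n ^ ((1:ℝ)/n) := by
    intro n hn
    have hnR : (0:ℝ) < (n:ℝ) := by exact_mod_cast hn
    have hbase : (0:ℝ) ≤ (4/81:ℝ)/(n:ℝ)^2 := by positivity
    have h1 : ((4/81:ℝ)/(n:ℝ)^2 * (27/4)^n) ^ ((1:ℝ)/n) ≤ f n ^ ((1:ℝ)/n) :=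
      Real.rpow_le_rpow (by positivity) (flow2 n hn) (by positivity)
    have h2 : ((4/81:ℝ)/(n:ℝ)^2 * (27/4)^n) ^ ((1:ℝ)/n)
        = ((4/81:ℝ)/(n:ℝ)^2) ^ ((1:ℝ)/n) * ((27/4:ℝ)^n) ^ ((1:ℝ)/n) :=
      Real.mul_rpow hbase (by positivity)
    have h3 : ((27/4:ℝ)^n) ^ ((1:ℝ)/n) = 27/4 := by
      rw [← Real.rpow_natCast (27/4:ℝ) n, ← Real.rpow_mul (by norm_num)]
      rw [mul_one_div, div_self hnR.ne', Real.rpow_one]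
    rw [h2, h3] at h1
    exact h1
  -- convergence of the lower bound
  have hnroot : Tendsto (fun n : ℕ => ((n:ℝ)) ^ ((1:ℝ)/(n:ℝ))) atTop (𝓝 1) := by
    have := tendsto_rpow_div.comp (tendsto_natCast_atTop_atTop (R := ℝ))
    exact this
  have hconst : Tendsto (fun n : ℕ => ((4/81:ℝ)) ^ ((1:ℝ)/(n:ℝ))) atTop (𝓝 1) := by
    have h := (tendsto_const_nhds (x := (4/81:ℝ)) (f := atTop (α := ℕ))).rpow
      tendsto_one_div_atTop_nhds_zero_nat (Or.inl (by norm_num))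
    simpa using h
  have hglim : Tendsto (fun n : ℕ => ((4/81:ℝ)/(n:ℝ)^2) ^ ((1:ℝ)/n) * (27/4)) atTop (𝓝 (27/4)) := by
    have hq : Tendsto (fun n : ℕ => ((4/81:ℝ)/(n:ℝ)^2) ^ ((1:ℝ)/n)) atTop (𝓝 1) := by
      have heq : ∀ᶠ n : ℕ in atTop, ((4/81:ℝ)) ^ ((1:ℝ)/(n:ℝ)) / (((n:ℝ)) ^ ((1:ℝ)/(n:ℝ)))^2
          = ((4/81:ℝ)/(n:ℝ)^2) ^ ((1:ℝ)/n) := by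
        filter_upwards [eventually_ge_atTop 1] with n hn
        have hnR : (0:ℝ) < (n:ℝ) := by exact_mod_cast hn
        have hswap : (((n:ℝ)^(2:ℕ)):ℝ)^((1:ℝ)/(n:ℝ)) = (((n:ℝ)^((1:ℝ)/(n:ℝ))))^(2:ℕ) := by
          rw [← Real.rpow_natCast (n:ℝ) 2, ← Real.rpow_mul hnR.le, mul_comm,
            Real.rpow_mul hnR.le, Real.rpow_natCast]
        conv_rhs => rw [Real.div_rpow (by norm_num) (by positivity)]
        rw [hswap]
      have hlim : Tendsto (fun n : ℕ => ((4/81:ℝ)) ^ ((1:ℝ)/(n:ℝ)) / (((n:ℝ)) ^ ((1:ℝ)/(n:ℝ)))^2)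
          atTop (𝓝 1) := by
        have := hconst.div (hnroot.pow 2) (show ((1:ℝ))^(2:ℕ) ≠ 0 by norm_num)
        simp only [one_pow, div_one] at this; exact this
      exact hlim.congr' heq
    have := hq.mul (tendsto_const_nhds (x := (27/4:ℝ)))
    simpa using this
  -- squeeze
  have hmain : Tendsto (fun n : ℕ => f n ^ ((1:ℝ)/n)) atTop (𝓝 (27/4)) := by
    apply tendsto_of_tendsto_of_tendsto_of_le_of_le' hglim tendsto_const_nhds
    · filter_upwards [eventually_ge_atTop 1] with n hn
      exact hlb n hn
    · filter_upwards [eventually_ge_atTop 1] with n hn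
      exact hub n hn
  exact hmain.liminf_eq
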